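/- Existence of the HIV endemic equilibrium (Theorem 4.3): let S̃ = N·(r2+d+dH)/(λσ), H̃ = Λ/(r2+d+dH) − d·N/(λσ), and H̃T = r2·H̃/(d+dH). Then (S̃, H̃, H̃T) satisfies the steady-state equations Λ − d·S̃ − λσ·S̃·H̃/N = 0, λσ·S̃·H̃/N − (r2+d+dH)·H̃ = 0, r2·H̃ − (d+dH)·H̃T = 0, and H̃ > 0 (equivalently, all three components are positive) if and only if R0H = Λ·λσ/(N·d·(r2+d+dH)) > 1. -/

import Mathlib

/-- Existence of the HIV endemic equilibrium (Theorem 4.3): `(S̃, H̃, H̃T)` satisfies the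
steady-state equations, and its components are positive (equivalently `H̃ > 0`) if and only
if `R0H > 1`. -/
theorem HIV_endemic_equilibrium (Lam d dH r2 ls Nv : ℝ)
    (hLam : 0 < Lam) (hd : 0 < d) (hdH : 0 < dH) (hr2 : 0 < r2)
    (hls : 0 < ls) (hNv : 0 < Nv)
    (St Ht HtT : ℝ)
    (hSt : St = Nv * (r2 + d + dH) / ls)
    (hHt : Ht = Lam / (r2 + d + dH) - d * Nv / ls)
    (hHtT : HtT = r2 * Ht / (d + dH)) :
    (Lam - d * St - ls * St * Ht / Nv = 0 ∧
     ls * St * Ht / Nv - (r2 + d + dH) * Ht = 0 ∧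
     r2 * Ht - (d + dH) * HtT = 0) ∧
    (0 < Ht ↔ 1 < Lam * ls / (Nv * d * (r2 + d + dH))) ∧
    ((0 < St ∧ 0 < Ht ∧ 0 < HtT) ↔ 1 < Lam * ls / (Nv * d * (r2 + d + dH))) := by
  have hk : 0 < r2 + d + dH := by linarith
  have hdd : 0 < d + dH := by linarith
  have hden : 0 < Nv * d * (r2 + d + dH) := by positivity
  have hStpos : 0 < St := by rw [hSt]; positivity
  have hHtiff : 0 < Ht ↔ 1 < Lam * ls / (Nv * d * (r2 + d + dH)) := by
    rw [hHt, lt_div_iff₀ hden, sub_pos, div_lt_div_iff₀ hls hk]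
    constructor <;> intro h <;> nlinarith
  refine ⟨⟨?_, ?_, ?_⟩, hHtiff, ?_⟩
  · rw [hSt, hHt]; field_simp; ring
  · rw [hSt, hHt]; field_simp; ring
  · rw [hHtT]; field_simp; ring
  · rw [← hHtiff]
    constructor
    · rintro ⟨_, h, _⟩; exact h
    · intro h; exact ⟨hStpos, h, by rw [hHtT]; positivity⟩
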